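/- ζ(3,2) = 3·ζ(2)·ζ(3) - (11/2)·ζ(5). -/

import Mathlib

noncomputable def zetaS (s : ℕ) : ℝ := ∑' n : ℕ, 1 / (n : ℝ) ^ s

noncomputable def zetaD (s t : ℕ) : ℝ :=
  ∑' n : ℕ, ∑' m : ℕ, if 0 < m ∧ m < n then 1 / ((n : ℝ) ^ s * (m : ℝ) ^ t) else 0

namespace Zeta32

open Finset Function Filter ENNReal

/-! ### Basic objects -/

noncomputable def aS (s : ℕ) (n : ℕ) : ℝ := 1 / (n : ℝ) ^ s

noncomputable def gD (s t : ℕ) (p : ℕ × ℕ) : ℝ :=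
  if 0 < p.2 ∧ p.2 < p.1 then 1 / ((p.1 : ℝ) ^ s * (p.2 : ℝ) ^ t) else 0

noncomputable def ZE (s : ℕ) : ℝ≥0∞ := ∑' n : ℕ, ENNReal.ofReal (aS s n)

noncomputable def DE (s t : ℕ) : ℝ≥0∞ := ∑' p : ℕ × ℕ, ENNReal.ofReal (gD s t p)

lemma aS_nonneg (s n : ℕ) : 0 ≤ aS s n := by unfold aS; positivity

lemma gD_nonneg (s t : ℕ) (p : ℕ × ℕ) : 0 ≤ gD s t p := by
  unfold gD; split <;> positivity

/-! ### Transfer helpers -/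

lemma summable_of_ofReal_tsum_ne_top {ι : Type*} {f : ι → ℝ} (hf : ∀ i, 0 ≤ f i)
    (h : ∑' i, ENNReal.ofReal (f i) ≠ ⊤) : Summable f := by
  have h2 := ENNReal.summable_toReal h
  have h3 : (fun i => (ENNReal.ofReal (f i)).toReal) = f :=
    funext fun i => ENNReal.toReal_ofReal (hf i)
  rwa [h3] at h2

lemma tsum_eq_toReal {ι : Type*} {f : ι → ℝ} (hf : ∀ i, 0 ≤ f i)
    (h : ∑' i, ENNReal.ofReal (f i) ≠ ⊤) :
    ∑' i, f i = (∑' i, ENNReal.ofReal (f i)).toReal := by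
  rw [← ENNReal.ofReal_tsum_of_nonneg hf (summable_of_ofReal_tsum_ne_top hf h),
    ENNReal.toReal_ofReal (tsum_nonneg hf)]

lemma summable_aS {s : ℕ} (hs : 2 ≤ s) : Summable (aS s) := by
  have : Summable (fun n : ℕ => 1 / (n : ℝ) ^ s) :=
    (Real.summable_one_div_nat_pow).2 (by omega)
  exact this

lemma ZE_eq {s : ℕ} (hs : 2 ≤ s) : ZE s = ENNReal.ofReal (zetaS s) := by
  rw [ZE, zetaS]
  exact (ENNReal.ofReal_tsum_of_nonneg (aS_nonneg s) (summable_aS hs)).symm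

lemma ZE_ne_top {s : ℕ} (hs : 2 ≤ s) : ZE s ≠ ⊤ := by
  rw [ZE_eq hs]; exact ENNReal.ofReal_ne_top

lemma zetaS_eq {s : ℕ} (hs : 2 ≤ s) : zetaS s = (ZE s).toReal := by
  rw [ZE_eq hs, ENNReal.toReal_ofReal]
  exact tsum_nonneg fun n => by positivity

/-! ### The product as a double sum -/

lemma prod_tsum (s t : ℕ) :
    ZE s * ZE t = ∑' p : ℕ × ℕ, ENNReal.ofReal (aS s p.1 * aS t p.2) := by
  rw [ENNReal.tsum_prod']
  simp_rw [ENNReal.ofReal_mul (aS_nonneg s _), ENNReal.tsum_mul_left,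
    ENNReal.tsum_mul_right]
  rfl

/-! ### Finiteness of the double sums -/

lemma tsum_ne_top_of_le {f : ℕ × ℕ → ℝ}
    (hle : ∀ p : ℕ × ℕ, f p ≤ aS 2 p.1 * aS 2 p.2) :
    ∑' p : ℕ × ℕ, ENNReal.ofReal (f p) ≠ ⊤ := by
  have hb : ∑' p : ℕ × ℕ, ENNReal.ofReal (f p)
      ≤ ∑' p : ℕ × ℕ, ENNReal.ofReal (aS 2 p.1 * aS 2 p.2) :=
    ENNReal.tsum_le_tsum fun p => ENNReal.ofReal_le_ofReal (hle p)
  rw [← prod_tsum 2 2] at hb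
  exact ne_top_of_le_ne_top (ENNReal.mul_ne_top (ZE_ne_top le_rfl) (ZE_ne_top le_rfl)) hb

lemma gD_le (s t : ℕ)
    (h : ∀ n m : ℕ, 0 < m → m < n → (n : ℝ) ^ 2 * (m : ℝ) ^ 2 ≤ (n : ℝ) ^ s * (m : ℝ) ^ t) :
    ∀ p : ℕ × ℕ, gD s t p ≤ aS 2 p.1 * aS 2 p.2 := by
  rintro ⟨n, m⟩
  unfold gD aS
  simp only
  split
  · rename_i hc
    have hm : (0:ℝ) < m := by exact_mod_cast hc.1
    have hn : (0:ℝ) < n := by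
      have := hc.1.trans hc.2; exact_mod_cast this
    rw [div_mul_div_comm, one_mul]
    exact one_div_le_one_div_of_le (by positivity) (h n m hc.1 hc.2)
  · positivity

lemma cast_facts {n m : ℕ} (hm : 0 < m) (hmn : m < n) :
    (1:ℝ) ≤ (m:ℝ) ∧ (m:ℝ) < (n:ℝ) ∧ (1:ℝ) ≤ (n:ℝ) := by
  refine ⟨by exact_mod_cast hm, by exact_mod_cast hmn, ?_⟩
  have : 1 ≤ n := hm.trans hmn
  exact_mod_cast this

lemma DE23_ne_top : DE 2 3 ≠ ⊤ := by
  apply tsum_ne_top_of_le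
  apply gD_le
  intro n m hm hmn
  obtain ⟨h1, h2, h3⟩ := cast_facts hm hmn
  calc (n:ℝ) ^ 2 * (m:ℝ) ^ 2 = ((n:ℝ) ^ 2 * (m:ℝ) ^ 2) * 1 := by ring
    _ ≤ ((n:ℝ) ^ 2 * (m:ℝ) ^ 2) * m := mul_le_mul_of_nonneg_left h1 (by positivity)
    _ = (n:ℝ) ^ 2 * (m:ℝ) ^ 3 := by ring

lemma DE32_ne_top : DE 3 2 ≠ ⊤ := by
  apply tsum_ne_top_of_le
  apply gD_le
  intro n m hm hmn
  obtain ⟨h1, h2, h3⟩ := cast_facts hm hmn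
  calc (n:ℝ) ^ 2 * (m:ℝ) ^ 2 = ((n:ℝ) ^ 2 * (m:ℝ) ^ 2) * 1 := by ring
    _ ≤ ((n:ℝ) ^ 2 * (m:ℝ) ^ 2) * n := mul_le_mul_of_nonneg_left h3 (by positivity)
    _ = (n:ℝ) ^ 3 * (m:ℝ) ^ 2 := by ring

lemma DE41_ne_top : DE 4 1 ≠ ⊤ := by
  apply tsum_ne_top_of_le
  apply gD_le
  intro n m hm hmn
  obtain ⟨h1, h2, h3⟩ := cast_facts hm hmn
  have hm2 : (m:ℝ) ≤ (n:ℝ) ^ 2 := by nlinarith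
  calc (n:ℝ) ^ 2 * (m:ℝ) ^ 2 = ((n:ℝ) ^ 2 * (m:ℝ)) * m := by ring
    _ ≤ ((n:ℝ) ^ 2 * (m:ℝ)) * (n:ℝ) ^ 2 := mul_le_mul_of_nonneg_left hm2 (by positivity)
    _ = (n:ℝ) ^ 4 * (m:ℝ) ^ 1 := by ring

/-! ### Interpreting zetaD -/

lemma zetaD_eq {s t : ℕ} (h : DE s t ≠ ⊤) : zetaD s t = (DE s t).toReal := by
  have h' : (∑' (n : ℕ) (m : ℕ), ENNReal.ofReal (gD s t (n, m))) ≠ ⊤ := by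
    rw [DE, ENNReal.tsum_prod'] at h; exact h
  rw [zetaD, DE, ENNReal.tsum_prod',
    ENNReal.tsum_toReal_eq fun n => ne_top_of_le_ne_top h' (ENNReal.le_tsum n)]
  apply tsum_congr
  intro n
  have hsum : Summable fun m => gD s t (n, m) := by
    apply summable_of_ne_finset_zero (s := Finset.range n)
    intro m hm
    simp only [Finset.mem_range, not_lt] at hm
    simp only [gD]
    rw [if_neg]
    rintro ⟨-, h2⟩
    omega
  rw [← ENNReal.ofReal_tsum_of_nonneg (fun m => gD_nonneg s t (n, m)) hsum,
    ENNReal.toReal_ofReal (tsum_nonneg fun m => gD_nonneg s t (n, m))]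
  rfl

/-! ### Stuffle relation -/

lemma diag_sum :
    ∑' p : ℕ × ℕ, ENNReal.ofReal (if p.1 = p.2 then aS 5 p.1 else 0) = ZE 5 := by
  have h := Function.Injective.tsum_eq (g := fun n : ℕ => (n, n))
      (f := fun p : ℕ × ℕ => ENNReal.ofReal (if p.1 = p.2 then aS 5 p.1 else 0))
      (fun a b hab => congrArg Prod.fst hab) ?_
  · rw [← h, ZE]
    exact tsum_congr fun n => by rw [if_pos rfl]
  · intro p hp
    have : p.1 = p.2 := by
      by_contra hne
      simp only [if_neg hne, ENNReal.ofReal_zero, Function.mem_support, ne_eq,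
        not_true_eq_false] at hp
    exact ⟨p.1, Prod.ext rfl this⟩

lemma stuffle_pointwise (p : ℕ × ℕ) :
    aS 2 p.1 * aS 3 p.2
      = gD 2 3 p + gD 3 2 (p.2, p.1) + (if p.1 = p.2 then aS 5 p.1 else 0) := by
  obtain ⟨n, m⟩ := p
  simp only [gD, aS]
  rcases Nat.eq_zero_or_pos n with hn | hn
  · subst hn
    rw [if_neg (by omega), if_neg (by omega)]
    have hd : (if (0:ℕ) = m then 1 / ((0:ℕ):ℝ) ^ 5 else 0) = 0 := by
      split <;> norm_num
    rw [hd]; norm_num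
  rcases Nat.eq_zero_or_pos m with hm | hm
  · subst hm
    rw [if_neg (by omega), if_neg (by omega), if_neg (by omega)]
    norm_num
  have hn' : (0:ℝ) < n := by exact_mod_cast hn
  have hm' : (0:ℝ) < m := by exact_mod_cast hm
  rcases lt_trichotomy m n with h | h | h
  · rw [if_pos ⟨hm, h⟩, if_neg (by omega), if_neg (by omega)]
    rw [div_mul_div_comm, one_mul]; ring
  · subst h
    rw [if_neg (by omega), if_neg (by omega), if_pos rfl]
    rw [div_mul_div_comm, one_mul]
    field_simp
    ring
  · rw [if_neg (by omega), if_pos ⟨hn, h⟩, if_neg (by omega)]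
    rw [div_mul_div_comm, one_mul]; ring

lemma stuffle : ZE 2 * ZE 3 = DE 2 3 + DE 3 2 + ZE 5 := by
  rw [prod_tsum 2 3]
  have key : ∀ p : ℕ × ℕ, ENNReal.ofReal (aS 2 p.1 * aS 3 p.2)
      = ENNReal.ofReal (gD 2 3 p) + ENNReal.ofReal (gD 3 2 (p.2, p.1))
        + ENNReal.ofReal (if p.1 = p.2 then aS 5 p.1 else 0) := by
    intro p
    rw [stuffle_pointwise p,
      ENNReal.ofReal_add (add_nonneg (gD_nonneg 2 3 p) (gD_nonneg 3 2 (p.2, p.1)))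
        (by split; exacts [aS_nonneg 5 p.1, le_rfl]),
      ENNReal.ofReal_add (gD_nonneg 2 3 p) (gD_nonneg 3 2 (p.2, p.1))]
  rw [tsum_congr key, ENNReal.tsum_add, ENNReal.tsum_add, diag_sum]
  have h32 : ∑' p : ℕ × ℕ, ENNReal.ofReal (gD 3 2 (p.2, p.1)) = DE 3 2 :=
    (Equiv.prodComm ℕ ℕ).tsum_eq fun p => ENNReal.ofReal (gD 3 2 p)
  rw [h32]
  rfl


/-! ### Shuffle (Euler partial-fraction) relation -/

noncomputable def uX (k j : ℕ) (p : ℕ × ℕ) : ℝ :=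
  if 0 < p.1 ∧ 0 < p.2 then 1 / (((p.1 : ℝ) + (p.2 : ℝ)) ^ k * (p.1 : ℝ) ^ j) else 0

noncomputable def uY (k j : ℕ) (p : ℕ × ℕ) : ℝ :=
  if 0 < p.1 ∧ 0 < p.2 then 1 / (((p.1 : ℝ) + (p.2 : ℝ)) ^ k * (p.2 : ℝ) ^ j) else 0

lemma uX_nonneg (k j : ℕ) (p : ℕ × ℕ) : 0 ≤ uX k j p := by unfold uX; split <;> positivity

lemma uY_nonneg (k j : ℕ) (p : ℕ × ℕ) : 0 ≤ uY k j p := by unfold uY; split <;> positivity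

lemma injX : Function.Injective (fun p : ℕ × ℕ => (p.1 + p.2, p.1)) := by
  intro p q h
  have h1 := congrArg Prod.fst h
  have h2 := congrArg Prod.snd h
  simp only at h1 h2
  exact Prod.ext (by omega) (by omega)

lemma injY : Function.Injective (fun p : ℕ × ℕ => (p.1 + p.2, p.2)) := by
  intro p q h
  have h1 := congrArg Prod.fst h
  have h2 := congrArg Prod.snd h
  simp only at h1 h2
  exact Prod.ext (by omega) (by omega)

lemma gD_supp {k j : ℕ} {p : ℕ × ℕ}
    (hp : ENNReal.ofReal (gD k j p) ≠ 0) : 0 < p.2 ∧ p.2 < p.1 := by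
  by_contra hc
  rw [gD, if_neg hc, ENNReal.ofReal_zero] at hp
  exact hp rfl

lemma uX_sum (k j : ℕ) : ∑' p : ℕ × ℕ, ENNReal.ofReal (uX k j p) = DE k j := by
  rw [DE]
  have h := Function.Injective.tsum_eq (g := fun p : ℕ × ℕ => (p.1 + p.2, p.1)) injX
      (f := fun p : ℕ × ℕ => ENNReal.ofReal (gD k j p)) ?_
  · rw [← h]
    apply tsum_congr
    rintro ⟨x, y⟩
    simp only
    congr 1
    rw [gD, uX]
    simp only
    rw [show ((x + y : ℕ) : ℝ) = (x:ℝ) + (y:ℝ) from by push_cast; ring]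
    exact if_congr (by omega) rfl rfl
  · intro p hp
    obtain ⟨h1, h2⟩ := gD_supp hp
    exact ⟨(p.2, p.1 - p.2), Prod.ext (by simp; omega) rfl⟩

lemma uY_sum (k j : ℕ) : ∑' p : ℕ × ℕ, ENNReal.ofReal (uY k j p) = DE k j := by
  rw [DE]
  have h := Function.Injective.tsum_eq (g := fun p : ℕ × ℕ => (p.1 + p.2, p.2)) injY
      (f := fun p : ℕ × ℕ => ENNReal.ofReal (gD k j p)) ?_
  · rw [← h]
    apply tsum_congr
    rintro ⟨x, y⟩
    simp only
    congr 1
    rw [gD, uY]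
    simp only
    rw [show ((x + y : ℕ) : ℝ) = (x:ℝ) + (y:ℝ) from by push_cast; ring]
    exact if_congr (by omega) rfl rfl
  · intro p hp
    obtain ⟨h1, h2⟩ := gD_supp hp
    exact ⟨(p.1 - p.2, p.2), Prod.ext (by simp; omega) rfl⟩

lemma shuffle_pointwise (p : ℕ × ℕ) :
    aS 2 p.1 * aS 3 p.2
      = uX 3 2 p + (3 * uX 4 1 p + (uY 2 3 p + (2 * uY 3 2 p + 3 * uY 4 1 p))) := by
  obtain ⟨x, y⟩ := p
  simp only [aS, uX, uY]
  rcases Nat.eq_zero_or_pos x with hx | hx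
  · subst hx
    rw [if_neg (by omega), if_neg (by omega), if_neg (by omega), if_neg (by omega),
      if_neg (by omega)]
    norm_num
  rcases Nat.eq_zero_or_pos y with hy | hy
  · subst hy
    rw [if_neg (by omega), if_neg (by omega), if_neg (by omega), if_neg (by omega),
      if_neg (by omega)]
    norm_num
  have hx' : (0:ℝ) < x := by exact_mod_cast hx
  have hy' : (0:ℝ) < y := by exact_mod_cast hy
  rw [if_pos ⟨hx, hy⟩, if_pos ⟨hx, hy⟩, if_pos ⟨hx, hy⟩, if_pos ⟨hx, hy⟩, if_pos ⟨hx, hy⟩]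
  have hs' : (0:ℝ) < (x:ℝ) + y := by linarith
  field_simp
  ring

lemma tsum_ofReal_smul (c : ℝ) (hc : 0 ≤ c) (f : ℕ × ℕ → ℝ) :
    ∑' p : ℕ × ℕ, ENNReal.ofReal (c * f p)
      = ENNReal.ofReal c * ∑' p : ℕ × ℕ, ENNReal.ofReal (f p) := by
  simp_rw [ENNReal.ofReal_mul hc]
  exact ENNReal.tsum_mul_left

lemma shuffle : ZE 2 * ZE 3 = DE 2 3 + 3 * DE 3 2 + 6 * DE 4 1 := by
  rw [prod_tsum 2 3]
  have key : ∀ p : ℕ × ℕ, ENNReal.ofReal (aS 2 p.1 * aS 3 p.2)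
      = ENNReal.ofReal (uX 3 2 p) + (ENNReal.ofReal (3 * uX 4 1 p)
        + (ENNReal.ofReal (uY 2 3 p) + (ENNReal.ofReal (2 * uY 3 2 p)
          + ENNReal.ofReal (3 * uY 4 1 p)))) := by
    intro p
    have n1 := uX_nonneg 3 2 p
    have n2 : 0 ≤ 3 * uX 4 1 p := mul_nonneg (by norm_num) (uX_nonneg 4 1 p)
    have n3 := uY_nonneg 2 3 p
    have n4 : 0 ≤ 2 * uY 3 2 p := mul_nonneg (by norm_num) (uY_nonneg 3 2 p)
    have n5 : 0 ≤ 3 * uY 4 1 p := mul_nonneg (by norm_num) (uY_nonneg 4 1 p)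
    rw [shuffle_pointwise p, ENNReal.ofReal_add n1 (by linarith),
      ENNReal.ofReal_add n2 (by linarith), ENNReal.ofReal_add n3 (by linarith),
      ENNReal.ofReal_add n4 n5]
  rw [tsum_congr key]
  rw [ENNReal.tsum_add, ENNReal.tsum_add, ENNReal.tsum_add, ENNReal.tsum_add]
  rw [uX_sum 3 2, uY_sum 2 3, tsum_ofReal_smul 3 (by norm_num) _,
    tsum_ofReal_smul 2 (by norm_num) _, tsum_ofReal_smul 3 (by norm_num) _,
    uX_sum 4 1, uY_sum 3 2, uY_sum 4 1]
  have h3 : ENNReal.ofReal (3:ℝ) = (3 : ℝ≥0∞) := by norm_num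
  have h2 : ENNReal.ofReal (2:ℝ) = (2 : ℝ≥0∞) := by norm_num
  rw [h3, h2]
  ring


/-! ### Harmonic numbers -/

noncomputable def Hh (m : ℕ) : ℝ := ((harmonic m : ℚ) : ℝ)

lemma Hh_zero : Hh 0 = 0 := by simp [Hh, harmonic]

lemma Hh_succ (n : ℕ) : Hh (n + 1) = Hh n + 1 / ((n : ℝ) + 1) := by
  rw [Hh, Hh, harmonic_succ]
  push_cast
  ring

lemma Hh_eq (m : ℕ) : Hh m = ∑ i ∈ Finset.range m, 1 / ((i : ℝ) + 1) := by
  induction m with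
  | zero => simp [Hh_zero]
  | succ n ih => rw [Finset.sum_range_succ, Hh_succ, ih]

lemma Hh_nonneg (m : ℕ) : 0 ≤ Hh m := by
  rw [Hh_eq]
  exact Finset.sum_nonneg fun i _ => by positivity

lemma Hh_Ioo (n : ℕ) : ∑ k ∈ Finset.Ioo 0 n, (1:ℝ) / (k:ℝ) = Hh (n - 1) := by
  rw [← Finset.Ico_add_one_left_eq_Ioo, Finset.sum_Ico_eq_sum_range, Hh_eq]
  apply Finset.sum_congr rfl
  intro i _
  push_cast
  ring

/-! ### Telescoping sum -/

lemma telescope (m : ℕ) (hm : 0 < m) :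
    HasSum (fun d : ℕ => if 0 < d then 1 / ((d : ℝ) * ((m : ℝ) + (d : ℝ))) else 0)
      (Hh m / (m : ℝ)) := by
  have hm' : (0:ℝ) < m := by exact_mod_cast hm
  set f : ℕ → ℝ := fun d => if 0 < d then 1 / ((d : ℝ) * ((m : ℝ) + (d : ℝ))) else 0 with hf
  have hnn : ∀ d, 0 ≤ f d := fun d => by
    rw [hf]; dsimp only; split <;> positivity
  rw [hasSum_iff_tendsto_nat_of_nonneg hnn, ← tendsto_add_atTop_iff_nat 1]
  set T : ℕ → ℝ := fun N => ∑ i ∈ Finset.range m, (1 / (m:ℝ)) * (1 / ((N : ℝ) + (i:ℝ) + 1))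
    with hT
  have key : ∀ N : ℕ, ∑ d ∈ Finset.range (N + 1), f d = Hh m / m - T N := by
    intro N
    induction N with
    | zero =>
      have hf0 : f 0 = 0 := by simp [hf]
      have hT0 : T 0 = Hh m / m := by
        rw [hT, Hh_eq, Finset.sum_div]
        apply Finset.sum_congr rfl
        intro i _
        push_cast
        ring
      rw [Finset.sum_range_one, hf0, hT0]
      ring
    | succ n ih =>
      rw [Finset.sum_range_succ, ih]
      have hstep : T n - T (n + 1) = f (n + 1) := by
        have htel := Finset.sum_range_sub'
          (fun i : ℕ => (1/(m:ℝ)) * (1/((n:ℝ)+1+(i:ℝ)))) m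
        calc T n - T (n+1)
            = ∑ i ∈ Finset.range m,
                ((fun i : ℕ => (1/(m:ℝ)) * (1/((n:ℝ)+1+(i:ℝ)))) i
                  - (fun i : ℕ => (1/(m:ℝ)) * (1/((n:ℝ)+1+(i:ℝ)))) (i+1)) := by
              rw [hT, ← Finset.sum_sub_distrib]
              apply Finset.sum_congr rfl
              intro i _
              push_cast
              ring
          _ = (fun i : ℕ => (1/(m:ℝ)) * (1/((n:ℝ)+1+(i:ℝ)))) 0
                - (fun i : ℕ => (1/(m:ℝ)) * (1/((n:ℝ)+1+(i:ℝ)))) m := htel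
          _ = f (n + 1) := by
              rw [hf]
              simp only
              rw [if_pos (Nat.succ_pos n)]
              have h1 : (0:ℝ) < (n:ℝ) + 1 := by positivity
              have h2 : (0:ℝ) < (n:ℝ) + 1 + m := by positivity
              push_cast
              field_simp
              ring
      linarith [hstep]
  simp only [key]
  have hT0 : Tendsto T atTop (nhds 0) := by
    have h := tendsto_finset_sum (f := fun (i : ℕ) (N : ℕ) =>
        (1 / (m:ℝ)) * (1 / ((N : ℝ) + (i:ℝ) + 1)))
        (x := Filter.atTop) (a := fun i : ℕ => (1/(m:ℝ)) * 0) (Finset.range m) ?_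
    · rw [hT]
      simpa using h
    · intro i _
      apply Filter.Tendsto.const_mul
      have h1 : Tendsto (fun N : ℕ => (N:ℝ) + (i:ℝ) + 1) atTop atTop := by
        apply Filter.tendsto_atTop_add_const_right
        apply Filter.tendsto_atTop_add_const_right
        exact tendsto_natCast_atTop_atTop
      simp only [one_div]
      exact h1.inv_tendsto_atTop
  simpa using tendsto_const_nhds.sub hT0

/-! ### The sum formula -/

noncomputable def aA (p : ℕ × ℕ) : ℝ :=
  if 0 < p.2 ∧ p.2 < p.1 then 1 / ((p.1:ℝ) * ((p.1:ℝ) - (p.2:ℝ)) * (p.2:ℝ)^3) else 0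

noncomputable def bB (p : ℕ × ℕ) : ℝ :=
  if 0 < p.2 ∧ p.2 < p.1 then 1 / ((p.1:ℝ)^4 * ((p.1:ℝ) - (p.2:ℝ))) else 0

lemma sub_pos_of_cond {p : ℕ × ℕ} (hc : 0 < p.2 ∧ p.2 < p.1) :
    (0:ℝ) < (p.1:ℝ) - (p.2:ℝ) := by
  have : (p.2:ℝ) < (p.1:ℝ) := by exact_mod_cast hc.2
  linarith

lemma aA_nonneg (p : ℕ × ℕ) : 0 ≤ aA p := by
  rw [aA]
  split
  · rename_i hc
    have h1 := sub_pos_of_cond hc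
    have h2 : (0:ℝ) < (p.2:ℝ) := by exact_mod_cast hc.1
    have h3 : (0:ℝ) < (p.1:ℝ) := by have := hc.1.trans hc.2; exact_mod_cast this
    positivity
  · exact le_rfl

lemma bB_nonneg (p : ℕ × ℕ) : 0 ≤ bB p := by
  rw [bB]
  split
  · rename_i hc
    have h1 := sub_pos_of_cond hc
    have h3 : (0:ℝ) < (p.1:ℝ) := by have := hc.1.trans hc.2; exact_mod_cast this
    positivity
  · exact le_rfl

lemma AE_inner (m : ℕ) :
    ∑' d : ℕ, ENNReal.ofReal
        (if 0 < m ∧ 0 < d then 1 / (((m:ℝ) + (d:ℝ)) * (d:ℝ) * (m:ℝ)^3) else 0)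
      = ENNReal.ofReal (if 0 < m then Hh m / (m:ℝ)^4 else 0) := by
  by_cases hm : 0 < m
  · have hm' : (0:ℝ) < m := by exact_mod_cast hm
    have h1 : HasSum
        (fun d : ℕ => if 0 < m ∧ 0 < d then 1 / (((m:ℝ)+(d:ℝ))*(d:ℝ)*(m:ℝ)^3) else 0)
        (Hh m / (m:ℝ)^4) := by
      have h2 := (telescope m hm).mul_left (1/(m:ℝ)^3)
      have heq : (fun d : ℕ =>
            (1/(m:ℝ)^3) * (if 0 < d then 1/((d:ℝ)*((m:ℝ)+(d:ℝ))) else 0))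
          = fun d : ℕ =>
            if 0 < m ∧ 0 < d then 1/(((m:ℝ)+(d:ℝ))*(d:ℝ)*(m:ℝ)^3) else 0 := by
        funext d
        by_cases hd : 0 < d
        · rw [if_pos hd, if_pos ⟨hm, hd⟩]
          have hd' : (0:ℝ) < d := by exact_mod_cast hd
          field_simp
        · rw [if_neg hd, if_neg (fun hc => hd hc.2), mul_zero]
      have hval : (1/(m:ℝ)^3) * (Hh m / (m:ℝ)) = Hh m / (m:ℝ)^4 := by
        rw [div_mul_div_comm, one_mul]
        norm_num [pow_succ]
      rw [heq, hval] at h2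
      exact h2
    rw [if_pos hm,
      ← ENNReal.ofReal_tsum_of_nonneg (fun d => by split <;> positivity) h1.summable,
      h1.tsum_eq]
  · rw [if_neg hm]
    have hz : ∀ d : ℕ, ENNReal.ofReal
        (if 0 < m ∧ 0 < d then 1/(((m:ℝ)+(d:ℝ))*(d:ℝ)*(m:ℝ)^3) else 0) = 0 := by
      intro d
      rw [if_neg fun hc => hm hc.1, ENNReal.ofReal_zero]
    rw [tsum_congr hz]
    simp

lemma AE_eq : ∑' p : ℕ × ℕ, ENNReal.ofReal (aA p)
    = ∑' n : ℕ, ENNReal.ofReal (if 0 < n then Hh n / (n:ℝ)^4 else 0) := by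
  have h := Function.Injective.tsum_eq (g := fun p : ℕ × ℕ => (p.1 + p.2, p.1)) injX
      (f := fun p : ℕ × ℕ => ENNReal.ofReal (aA p)) ?_
  · rw [← h, ENNReal.tsum_prod']
    apply tsum_congr
    intro m
    rw [← AE_inner m]
    apply tsum_congr
    intro d
    congr 1
    rw [aA]
    simp only
    rw [show ((m + d : ℕ):ℝ) = (m:ℝ) + (d:ℝ) from by push_cast; ring]
    exact if_congr (by omega) (by ring_nf) rfl
  · intro p hp
    have hcond : 0 < p.2 ∧ p.2 < p.1 := by
      by_contra hc
      rw [Function.mem_support, aA, if_neg hc, ENNReal.ofReal_zero] at hp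
      exact hp rfl
    exact ⟨(p.2, p.1 - p.2), Prod.ext (by simp; omega) rfl⟩

lemma BE_eq : ∑' p : ℕ × ℕ, ENNReal.ofReal (bB p)
    = ∑' n : ℕ, ENNReal.ofReal (if 0 < n then Hh (n - 1) / (n:ℝ)^4 else 0) := by
  rw [ENNReal.tsum_prod']
  apply tsum_congr
  intro n
  have hfin : ∀ m ∉ Finset.Ioo 0 n, ENNReal.ofReal (bB (n, m)) = 0 := by
    intro m hm
    rw [Finset.mem_Ioo] at hm
    rw [bB, if_neg (by simpa using hm), ENNReal.ofReal_zero]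
  rw [tsum_eq_sum hfin, ← ENNReal.ofReal_sum_of_nonneg (fun m _ => bB_nonneg (n, m))]
  congr 1
  rcases Nat.eq_zero_or_pos n with hn | hn
  · subst hn
    simp
  rw [if_pos hn]
  have hn' : (0:ℝ) < n := by exact_mod_cast hn
  have hbij : ∑ m ∈ Finset.Ioo 0 n, bB (n, m)
      = ∑ k ∈ Finset.Ioo 0 n, 1 / ((n:ℝ)^4 * (k:ℝ)) := by
    apply Finset.sum_nbij' (i := fun m => n - m) (j := fun k => n - k)
    · intro a ha
      rw [Finset.mem_Ioo] at ha ⊢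
      omega
    · intro a ha
      rw [Finset.mem_Ioo] at ha ⊢
      omega
    · intro a ha
      rw [Finset.mem_Ioo] at ha
      omega
    · intro a ha
      rw [Finset.mem_Ioo] at ha
      omega
    · intro m hm
      rw [Finset.mem_Ioo] at hm
      rw [bB, if_pos (by simpa using hm)]
      congr 1
      rw [Nat.cast_sub (le_of_lt hm.2)]
  rw [hbij, ← Hh_Ioo n, Finset.sum_div]
  apply Finset.sum_congr rfl
  intro k hk
  rw [Finset.mem_Ioo] at hk
  have hk' : (0:ℝ) < k := by exact_mod_cast hk.1
  field_simp

lemma sf_pointwise (p : ℕ × ℕ) : gD 2 3 p + gD 3 2 p + gD 4 1 p + bB p = aA p := by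
  obtain ⟨n, m⟩ := p
  simp only [gD, bB, aA]
  by_cases hc : 0 < m ∧ m < n
  · rw [if_pos hc, if_pos hc, if_pos hc, if_pos hc, if_pos hc]
    have hm' : (0:ℝ) < m := by exact_mod_cast hc.1
    have hn' : (0:ℝ) < n := by have := hc.1.trans hc.2; exact_mod_cast this
    have hd : (0:ℝ) < (n:ℝ) - m := by
      have : (m:ℝ) < n := by exact_mod_cast hc.2
      linarith
    field_simp
    ring
  · rw [if_neg hc, if_neg hc, if_neg hc, if_neg hc, if_neg hc]
    ring

lemma BE_ne_top : ∑' p : ℕ × ℕ, ENNReal.ofReal (bB p) ≠ ⊤ := by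
  apply tsum_ne_top_of_le
  rintro ⟨n, m⟩
  rw [bB, aS, aS]
  simp only
  split
  · rename_i hc
    have hm' : (1:ℝ) ≤ m := by exact_mod_cast hc.1
    have h1 : (m:ℝ) + 1 ≤ n := by exact_mod_cast hc.2
    have hm0 : (0:ℝ) < m := by linarith
    have hn0 : (0:ℝ) < n := by linarith
    have e1 : (1:ℝ) ≤ (n:ℝ) - m := by linarith
    have e2 : (m:ℝ) ≤ n := by linarith
    rw [div_mul_div_comm, one_mul]
    apply one_div_le_one_div_of_le (by positivity)
    calc (n:ℝ)^2 * (m:ℝ)^2 ≤ (n:ℝ)^2 * (n:ℝ)^2 := by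
          apply mul_le_mul_of_nonneg_left _ (by positivity)
          exact pow_le_pow_left₀ (by positivity) e2 2
      _ = (n:ℝ)^4 * 1 := by ring
      _ ≤ (n:ℝ)^4 * ((n:ℝ) - m) := mul_le_mul_of_nonneg_left e1 (by positivity)
  · rename_i hc
    have h0 : (0:ℝ) ≤ 1 / (n:ℝ)^2 * (1 / (m:ℝ)^2) := by positivity
    linarith

lemma sumformula : DE 2 3 + DE 3 2 + DE 4 1 = ZE 5 := by
  have key : ∀ p : ℕ × ℕ, ENNReal.ofReal (gD 2 3 p) + ENNReal.ofReal (gD 3 2 p)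
      + ENNReal.ofReal (gD 4 1 p) + ENNReal.ofReal (bB p) = ENNReal.ofReal (aA p) := by
    intro p
    rw [← ENNReal.ofReal_add (gD_nonneg 2 3 p) (gD_nonneg 3 2 p),
      ← ENNReal.ofReal_add (add_nonneg (gD_nonneg 2 3 p) (gD_nonneg 3 2 p))
        (gD_nonneg 4 1 p),
      ← ENNReal.ofReal_add
        (add_nonneg (add_nonneg (gD_nonneg 2 3 p) (gD_nonneg 3 2 p)) (gD_nonneg 4 1 p))
        (bB_nonneg p),
      sf_pointwise p]
  have hsum : DE 2 3 + DE 3 2 + DE 4 1 + (∑' p : ℕ × ℕ, ENNReal.ofReal (bB p))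
      = ∑' p : ℕ × ℕ, ENNReal.ofReal (aA p) := by
    rw [DE, DE, DE, ← ENNReal.tsum_add, ← ENNReal.tsum_add, ← ENNReal.tsum_add]
    exact tsum_congr key
  have hAB : ∑' p : ℕ × ℕ, ENNReal.ofReal (aA p)
      = (∑' p : ℕ × ℕ, ENNReal.ofReal (bB p)) + ZE 5 := by
    rw [AE_eq, BE_eq, ZE, ← ENNReal.tsum_add]
    apply tsum_congr
    intro n
    rw [← ENNReal.ofReal_add
      (by split
          · exact div_nonneg (Hh_nonneg _) (by positivity)
          · exact le_rfl)
      (aS_nonneg 5 n)]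
    congr 1
    rcases Nat.eq_zero_or_pos n with hn | hn
    · subst hn
      norm_num [aS]
    · rw [if_pos hn, if_pos hn]
      obtain ⟨k, rfl⟩ : ∃ k, n = k + 1 := ⟨n - 1, by omega⟩
      rw [Nat.add_sub_cancel, Hh_succ, aS]
      have hk1 : (0:ℝ) < (k:ℝ) + 1 := by positivity
      push_cast
      field_simp
  rw [hAB] at hsum
  rw [add_comm] at hsum
  exact (ENNReal.add_right_inj BE_ne_top).mp hsum

end Zeta32

theorem zeta_3_2 : zetaD 3 2 = 3 * zetaS 2 * zetaS 3 - (11/2) * zetaS 5 := by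
  have h2 : zetaS 2 = (Zeta32.ZE 2).toReal := Zeta32.zetaS_eq (by norm_num)
  have h3 : zetaS 3 = (Zeta32.ZE 3).toReal := Zeta32.zetaS_eq (by norm_num)
  have h5 : zetaS 5 = (Zeta32.ZE 5).toReal := Zeta32.zetaS_eq (by norm_num)
  have d32 : zetaD 3 2 = (Zeta32.DE 3 2).toReal := Zeta32.zetaD_eq Zeta32.DE32_ne_top
  have f23 := Zeta32.DE23_ne_top
  have f32 := Zeta32.DE32_ne_top
  have f41 := Zeta32.DE41_ne_top
  have fZ5 : Zeta32.ZE 5 ≠ ⊤ := Zeta32.ZE_ne_top (by norm_num)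
  have e1 := congrArg ENNReal.toReal Zeta32.stuffle
  have e2 := congrArg ENNReal.toReal Zeta32.shuffle
  have e3 := congrArg ENNReal.toReal Zeta32.sumformula
  rw [ENNReal.toReal_mul, ENNReal.toReal_add (ENNReal.add_ne_top.mpr ⟨f23, f32⟩) fZ5,
    ENNReal.toReal_add f23 f32] at e1
  have h3f : (3 : ENNReal) * Zeta32.DE 3 2 ≠ ⊤ :=
    ENNReal.mul_ne_top (by norm_num) f32
  have h6f : (6 : ENNReal) * Zeta32.DE 4 1 ≠ ⊤ :=
    ENNReal.mul_ne_top (by norm_num) f41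
  rw [ENNReal.toReal_mul, ENNReal.toReal_add (ENNReal.add_ne_top.mpr ⟨f23, h3f⟩) h6f,
    ENNReal.toReal_add f23 h3f, ENNReal.toReal_mul, ENNReal.toReal_mul] at e2
  rw [ENNReal.toReal_add (ENNReal.add_ne_top.mpr ⟨f23, f32⟩) f41,
    ENNReal.toReal_add f23 f32] at e3
  have c3 : (3 : ENNReal).toReal = 3 := by norm_num
  have c6 : (6 : ENNReal).toReal = 6 := by norm_num
  rw [c3, c6] at e2
  rw [d32, h2, h3, h5]
  linarith [e1, e2, e3]
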